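/- arXiv:1707.09163 — 3 statements merged into one kernel-verified Lean document; each statement's English description precedes it below -/
import Mathlib

section
/- Let H be a complex Hilbert space, V a subspace, and B : V × V → ℂ a sesquilinear form such that B(g,g) is real and B(g,g) ≥ α ‖g‖_V² for all g ∈ V (α > 0), where ‖·‖_V ≥ ‖·‖_H. Fix γ ∈ (0, π/2) and μ ≥ 0, and let z ∈ ℂ with γ ≤ |arg z| ≤ π. If g ∈ V satisfies -z(g,φ) + B(g,φ) + μ(g,φ) = (v,φ) for all φ ∈ V, then ‖g‖_H ≤ C_γ/(|z| + μ) ‖v‖_H with C_γ = (sin(γ/2))^{-1}. -/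
theorem stmt_1 {H : Type*} [NormedAddCommGroup H] [InnerProductSpace ℂ H] [CompleteSpace H]
    (V : Submodule ℂ H) (NV : H → ℝ) (B : H → H → ℂ) (α γ μ : ℝ) (z : ℂ) (g v : H)
    (hα : 0 < α) (hγ0 : 0 < γ) (hγ : γ < Real.pi / 2) (hμ : 0 ≤ μ)
    (hN : ∀ u ∈ V, ‖u‖ ≤ NV u)
    (hBreal : ∀ u ∈ V, (B u u).im = 0)
    (hBcoer : ∀ u ∈ V, α * NV u ^ 2 ≤ (B u u).re)
    (hz1 : γ ≤ |z.arg|) (hz2 : |z.arg| ≤ Real.pi)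
    (hg : g ∈ V)
    (heq : ∀ φ ∈ V, -z * (inner ℂ φ g : ℂ) + B g φ + (μ : ℂ) * (inner ℂ φ g : ℂ) = (inner ℂ φ v : ℂ)) :
    ‖g‖ ≤ (Real.sin (γ / 2))⁻¹ / (‖z‖ + μ) * ‖v‖ := by
  have hπ := Real.pi_pos
  set s := Real.sin (γ / 2) with hs
  have hs0 : 0 < s := Real.sin_pos_of_pos_of_lt_pi (by linarith) (by linarith)
  have hs1 : s ≤ 1 := Real.sin_le_one _
  have hzne : z ≠ 0 := by
    intro h
    rw [h] at hz1
    simp [Complex.arg_zero] at hz1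
    linarith
  have hr0 : 0 < ‖z‖ := by simpa using hzne
  set r := ‖z‖ with hrr
  -- cos relation
  have hcosγ : Real.cos γ = 1 - 2 * s ^ 2 := by
    have h1 : Real.cos (2 * (γ/2)) = Real.cos (γ/2) ^ 2 - Real.sin (γ/2) ^ 2 := Real.cos_two_mul' _
    have h2 := Real.sin_sq_add_cos_sq (γ/2)
    rw [show 2 * (γ/2) = γ by ring] at h1
    linarith
  have hre : z.re ≤ r * Real.cos γ := by
    have h1 : Real.cos z.arg ≤ Real.cos γ := by
      rw [← Real.cos_abs z.arg]
      exact Real.cos_le_cos_of_nonneg_of_le_pi (le_of_lt hγ0) hz2 hz1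
    have h2 : r * Real.cos z.arg = z.re := Complex.norm_mul_cos_arg z
    nlinarith
  have hzsq : z.re ^ 2 + z.im ^ 2 = r ^ 2 := by
    rw [hrr, Complex.sq_norm, Complex.normSq_apply]; ring
  -- test with φ = g
  have E := heq g hg
  have hinner : (inner ℂ g g : ℂ) = ((‖g‖ : ℂ)) ^ 2 := inner_self_eq_norm_sq_to_K g
  set a := ‖g‖ ^ 2 with ha
  have ha0 : 0 ≤ a := sq_nonneg _
  have hB : B g g = ((B g g).re : ℂ) := by
    apply Complex.ext
    · simp
    · simpa using hBreal g hg
  set b := (B g g).re + μ * a with hb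
  have hbμ : μ * a ≤ b := by
    have h1 : 0 ≤ (B g g).re := le_trans (by positivity) (hBcoer g hg)
    linarith
  have hb0 : 0 ≤ b := le_trans (by positivity) hbμ
  clear_value s r a b
  have hc : (inner ℂ g v : ℂ) = (b : ℂ) - z * a := by
    rw [← E, hinner, hB, hb, ha]
    push_cast
    ring
  have hcabs : ‖(b : ℂ) - z * (a : ℂ)‖ ≤ ‖g‖ * ‖v‖ := by
    rw [← hc]
    simpa using norm_inner_le_norm (𝕜 := ℂ) g v
  -- key inequality
  have hkey : s * (r * a + b) ≤ ‖(b : ℂ) - z * (a : ℂ)‖ := by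
    have hsq : (‖(b : ℂ) - z * (a : ℂ)‖) ^ 2
        = (b - z.re * a) ^ 2 + (z.im * a) ^ 2 := by
      rw [Complex.sq_norm, Complex.normSq_apply]
      simp
      ring
    have habs0 : 0 ≤ ‖(b : ℂ) - z * (a : ℂ)‖ := norm_nonneg _
    have h1 : 0 ≤ (1 - s ^ 2) * (b - r * a) ^ 2 :=
      mul_nonneg (by nlinarith) (sq_nonneg _)
    have hre' : z.re ≤ r * (1 - 2 * s ^ 2) := by rw [hcosγ] at hre; exact hre
    have h2 : 0 ≤ (r * (1 - 2 * s ^ 2) - z.re) * (a * b) :=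
      mul_nonneg (by linarith) (mul_nonneg ha0 hb0)
    have h3 : (z.re ^ 2 + z.im ^ 2) * a ^ 2 = r ^ 2 * a ^ 2 := by rw [hzsq]
    have hsqineq : (s * (r * a + b)) ^ 2 ≤ (‖(b : ℂ) - z * (a : ℂ)‖) ^ 2 := by
      rw [hsq]; nlinarith [h1, h2, h3]
    exact le_of_pow_le_pow_left₀ two_ne_zero habs0 hsqineq
  have hmain : s * ((r + μ) * a) ≤ ‖g‖ * ‖v‖ := by
    have : s * ((r + μ) * a) ≤ s * (r * a + b) := by nlinarith
    linarith [le_trans this (le_trans hkey hcabs)]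
  have hrμ : 0 < r + μ := by linarith
  rw [div_mul_eq_mul_div, le_div_iff₀ hrμ, inv_mul_eq_div, le_div_iff₀ hs0]
  rw [ha] at hmain
  rcases eq_or_lt_of_le (norm_nonneg g) with h | h
  · rw [← h]; simp
  · refine le_of_mul_le_mul_left ?_ h
    calc ‖g‖ * (‖g‖ * (r + μ) * s) = s * ((r + μ) * ‖g‖ ^ 2) := by ring
      _ ≤ ‖g‖ * ‖v‖ := hmain
end

section
/- Let 0 = t_0 < t_1 < ⋯ < t_M = T with k_j = t_j - t_{j-1} and suppose max_{l ≤ j ≤ m} k_j < (t_m - t_{l-1})/2 for fixed 1 ≤ l ≤ m ≤ M. Then for every λ > 0, λ² ∏_{j=l}^{m} (1 + k_j λ)^{-1} ≤ 4/(t_m - t_{l-1})². -/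
private lemma prod_one_add_ge (x : ℕ → ℝ) (s : Finset ℕ) (hx : ∀ i ∈ s, 0 ≤ x i) :
    (∑ i ∈ s, (x i)^2 ≤ (∑ i ∈ s, x i)^2) ∧
    1 + (∑ i ∈ s, x i) + ((∑ i ∈ s, x i)^2 - ∑ i ∈ s, (x i)^2)/2
      ≤ ∏ i ∈ s, (1 + x i) := by
  induction s using Finset.cons_induction with
  | empty => simp
  | cons a s ha ih =>
    have hxa : 0 ≤ x a := hx a (Finset.mem_cons_self a s)
    have hxs : ∀ i ∈ s, 0 ≤ x i := fun i hi => hx i (Finset.mem_cons_of_mem hi)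
    obtain ⟨h1, h2⟩ := ih hxs
    have hS : 0 ≤ ∑ i ∈ s, x i := Finset.sum_nonneg hxs
    simp only [Finset.sum_cons, Finset.prod_cons]
    constructor
    · nlinarith
    · nlinarith

private lemma telescope (t : ℕ → ℝ) (l : ℕ) (hl : 1 ≤ l) :
    ∀ m, l ≤ m → ∑ j ∈ Finset.Icc l m, (t j - t (j-1)) = t m - t (l-1) := by
  intro m hm
  induction m, hm using Nat.le_induction with
  | base => simp
  | succ n hn ih =>
    rw [Finset.sum_Icc_succ_top (le_trans hn (Nat.le_succ n)), ih]
    simp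

theorem stmt_5 (M : ℕ) (t : ℕ → ℝ) (l m : ℕ)
    (ht0 : t 0 = 0) (hmono : ∀ j, j < M → t j < t (j+1))
    (hl : 1 ≤ l) (hlm : l ≤ m) (hm : m ≤ M)
    (hkmax : ∀ j ∈ Finset.Icc l m, t j - t (j-1) < (t m - t (l-1)) / 2) :
    ∀ lam : ℝ, 0 < lam →
      lam^2 * ∏ j ∈ Finset.Icc l m, (1 + (t j - t (j-1)) * lam)⁻¹
        ≤ 4 / (t m - t (l-1))^2 := by
  intro lam hlam
  set D : ℝ := t m - t (l-1) with hD
  -- each step is positive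
  have hkpos : ∀ j ∈ Finset.Icc l m, 0 < t j - t (j-1) := by
    intro j hj
    rw [Finset.mem_Icc] at hj
    have hj1 : 1 ≤ j := le_trans hl hj.1
    have : t (j-1) < t (j-1+1) := hmono (j-1) (by omega)
    rw [Nat.sub_add_cancel hj1] at this
    linarith
  have htel : ∑ j ∈ Finset.Icc l m, (t j - t (j-1)) = D := telescope t l hl m hlm
  have hne : (Finset.Icc l m).Nonempty := Finset.nonempty_Icc.2 hlm
  have hDpos : 0 < D := by
    rw [← htel]
    exact Finset.sum_pos hkpos hne
  -- sum of squares bound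
  have hsq : ∑ j ∈ Finset.Icc l m, (t j - t (j-1))^2 ≤ D^2/2 := by
    have : ∑ j ∈ Finset.Icc l m, (t j - t (j-1))^2
        ≤ ∑ j ∈ Finset.Icc l m, (D/2) * (t j - t (j-1)) := by
      apply Finset.sum_le_sum
      intro j hj
      have h1 := hkpos j hj
      have h2 := hkmax j hj
      nlinarith
    rw [← Finset.mul_sum, htel] at this
    linarith
  -- apply the product lemma with x j = k_j * lam
  set x : ℕ → ℝ := fun j => (t j - t (j-1)) * lam with hx
  have hxnn : ∀ j ∈ Finset.Icc l m, 0 ≤ x j := fun j hj =>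
    mul_nonneg (le_of_lt (hkpos j hj)) (le_of_lt hlam)
  obtain ⟨hq, hp⟩ := prod_one_add_ge x _ hxnn
  have hsumx : ∑ j ∈ Finset.Icc l m, x j = D * lam := by
    rw [hx]
    rw [← Finset.sum_mul, htel]
  have hsumx2 : ∑ j ∈ Finset.Icc l m, (x j)^2
      = (∑ j ∈ Finset.Icc l m, (t j - t (j-1))^2) * lam^2 := by
    simp only [hx, mul_pow]
    rw [← Finset.sum_mul]
  have hsumx2le : ∑ j ∈ Finset.Icc l m, (x j)^2 ≤ D^2/2 * lam^2 := by
    rw [hsumx2]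
    have : 0 < lam^2 := by positivity
    nlinarith
  have hPbound : lam^2 * D^2 / 4 ≤ ∏ j ∈ Finset.Icc l m, (1 + x j) := by
    have hDl : 0 ≤ D * lam := le_of_lt (mul_pos hDpos hlam)
    calc lam^2 * D^2 / 4
        ≤ 1 + D * lam + ((D*lam)^2 - D^2/2 * lam^2)/2 := by nlinarith
      _ ≤ 1 + (∑ j ∈ Finset.Icc l m, x j)
            + ((∑ j ∈ Finset.Icc l m, x j)^2 - ∑ j ∈ Finset.Icc l m, (x j)^2)/2 := by
          rw [hsumx]; linarith
      _ ≤ _ := hp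
  have hPpos : 0 < ∏ j ∈ Finset.Icc l m, (1 + x j) := by
    have : 0 < lam^2 * D^2 / 4 := by positivity
    linarith
  have hprodinv : ∏ j ∈ Finset.Icc l m, (1 + (t j - t (j-1)) * lam)⁻¹
      = (∏ j ∈ Finset.Icc l m, (1 + x j))⁻¹ := by
    rw [← Finset.prod_inv_distrib]
  rw [hprodinv]
  rw [mul_inv_le_iff₀ hPpos]
  rw [div_mul_eq_mul_div, le_div_iff₀ (by positivity : (0:ℝ) < D^2)]
  calc lam^2 * D^2 = 4 * (lam^2 * D^2 / 4) := by ring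
    _ ≤ 4 * ∏ j ∈ Finset.Icc l m, (1 + x j) := by linarith
end

section
/- Let 0 = t_0 < t_1 < ⋯ < t_M = T with k_j = t_j - t_{j-1}, and suppose there is κ > 0 with κ^{-1} ≤ k_j/k_{j+1} ≤ κ for all 1 ≤ j ≤ M-1. Fix 1 ≤ l < m ≤ M and set k_max = max_{l ≤ j ≤ m} k_j. If k_max ≥ (t_m - t_{l-1})/2, then for every λ > 0, λ² ∏_{j=l}^{m} (1 + k_j λ)^{-1} ≤ C/(t_m - t_{l-1})², where C depends only on κ. -/
theorem stmt_6 (κ : ℝ) (hκ : 0 < κ) :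
    ∃ C > 0, ∀ (M : ℕ) (t : ℕ → ℝ) (l m : ℕ),
      t 0 = 0 → (∀ j, j < M → t j < t (j+1)) →
      (∀ j, 1 ≤ j → j ≤ M - 1 →
        κ⁻¹ ≤ (t j - t (j-1)) / (t (j+1) - t j) ∧
          (t j - t (j-1)) / (t (j+1) - t j) ≤ κ) →
      1 ≤ l → l < m → m ≤ M →
      (∃ j ∈ Finset.Icc l m, (t m - t (l-1)) / 2 ≤ t j - t (j-1) ∧
          ∀ i ∈ Finset.Icc l m, t i - t (i-1) ≤ t j - t (j-1)) →
      ∀ lam : ℝ, 0 < lam →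
        lam^2 * ∏ j ∈ Finset.Icc l m, (1 + (t j - t (j-1)) * lam)⁻¹
          ≤ C / (t m - t (l-1))^2 := by
  refine ⟨4 * κ, by positivity, ?_⟩
  rintro M t l m ht0 hinc hrat hl hlm hm ⟨j₀, hj₀mem, hj₀big, hj₀max⟩ lam hlam
  obtain ⟨hlj₀, hj₀m⟩ := Finset.mem_Icc.mp hj₀mem
  -- monotonicity
  have hmono : ∀ i j, i ≤ j → j ≤ M → t i ≤ t j := by
    intro i j hij hjM
    induction j with
    | zero => simp [Nat.le_zero.mp hij]
    | succ n ih =>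
      rcases Nat.lt_or_ge i (n+1) with h | h
      · exact le_trans (ih (Nat.lt_succ_iff.mp h) (by omega))
          (le_of_lt (hinc n (by omega)))
      · have : i = n + 1 := le_antisymm hij h
        simp [this]
  have hstrict : ∀ i j, i < j → j ≤ M → t i < t j := by
    intro i j hij hjM
    refine lt_of_le_of_lt (hmono i (j-1) (by omega) (by omega)) ?_
    have := hinc (j-1) (by omega)
    rwa [Nat.sub_add_cancel (by omega)] at this
  have hkpos : ∀ j, 1 ≤ j → j ≤ M → 0 < t j - t (j-1) := by
    intro j h1 h2
    have := hstrict (j-1) j (by omega) h2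
    linarith
  set a := t j₀ - t (j₀ - 1) with ha_def
  have ha : 0 < a := hkpos j₀ (by omega) (by omega)
  set D := t m - t (l-1) with hD_def
  have hD : 0 < D := by
    have := hstrict (l-1) m (by omega) hm
    simp [hD_def]; linarith
  -- pick a neighbor j₁ of j₀ inside [l,m] with k_{j₁} ≥ a/κ
  have hnb : ∃ j₁ ∈ Finset.Icc l m, j₁ ≠ j₀ ∧ a / κ ≤ t j₁ - t (j₁ - 1) := by
    rcases Nat.lt_or_ge j₀ m with hcase | hcase
    · -- use j₀ + 1
      refine ⟨j₀ + 1, Finset.mem_Icc.mpr ⟨by omega, by omega⟩, by omega, ?_⟩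
      have hb : 0 < t (j₀+1) - t j₀ := by
        have := hstrict j₀ (j₀+1) (by omega) (by omega); linarith
      have hr := (hrat j₀ (by omega) (by omega)).2
      have : a ≤ κ * (t (j₀+1) - t j₀) := by
        rw [div_le_iff₀ hb] at hr; linarith
      have h2 : a / κ ≤ t (j₀+1) - t j₀ := by
        rw [div_le_iff₀ hκ]; linarith
      simpa using h2
    · -- j₀ = m; use m - 1
      have hj₀eq : j₀ = m := by omega
      refine ⟨m - 1, Finset.mem_Icc.mpr ⟨by omega, by omega⟩, by omega, ?_⟩
      have hr := (hrat (m-1) (by omega) (by omega)).1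
      have hsm : m - 1 + 1 = m := by omega
      rw [hsm] at hr
      have hb : 0 < t m - t (m-1) := by
        have := hstrict (m-1) m (by omega) hm; linarith
      have haeq : a = t m - t (m-1) := by rw [ha_def, hj₀eq]
      rw [le_div_iff₀ hb] at hr
      rw [haeq, div_le_iff₀ hκ]
      have hinv : κ * κ⁻¹ = 1 := mul_inv_cancel₀ (ne_of_gt hκ)
      nlinarith
  obtain ⟨j₁, hj₁mem, hj₁ne, hj₁low⟩ := hnb
  set b := t j₁ - t (j₁ - 1) with hb_def
  have hb : 0 < b := by
    obtain ⟨h1, h2⟩ := Finset.mem_Icc.mp hj₁mem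
    exact hkpos j₁ (by omega) (by omega)
  -- bound the product by the two factors at j₀ and j₁
  set f : ℕ → ℝ := fun j => (1 + (t j - t (j-1)) * lam)⁻¹ with hf_def
  have hfpos : ∀ j ∈ Finset.Icc l m, 0 < f j := by
    intro j hj
    obtain ⟨h1, h2⟩ := Finset.mem_Icc.mp hj
    have := hkpos j (by omega) (by omega)
    have : (0:ℝ) < 1 + (t j - t (j-1)) * lam := by nlinarith
    positivity
  have hfle1 : ∀ j ∈ Finset.Icc l m, f j ≤ 1 := by
    intro j hj
    obtain ⟨h1, h2⟩ := Finset.mem_Icc.mp hj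
    have hk := hkpos j (by omega) (by omega)
    rw [hf_def]
    simp only
    rw [inv_le_one_iff₀]
    right; nlinarith
  have hsub : ({j₁, j₀} : Finset ℕ) ⊆ Finset.Icc l m := by
    intro x hx
    simp only [Finset.mem_insert, Finset.mem_singleton] at hx
    rcases hx with rfl | rfl
    · exact hj₁mem
    · exact hj₀mem
  have hprod : ∏ j ∈ Finset.Icc l m, f j ≤ f j₁ * f j₀ := by
    have hsplit := Finset.prod_sdiff (f := f) hsub
    have hrest : ∏ j ∈ Finset.Icc l m \ {j₁, j₀}, f j ≤ 1 := by
      apply Finset.prod_le_one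
      · intro i hi
        exact le_of_lt (hfpos i (Finset.mem_sdiff.mp hi).1)
      · intro i hi
        exact hfle1 i (Finset.mem_sdiff.mp hi).1
    have hpair : ∏ j ∈ ({j₁, j₀} : Finset ℕ), f j = f j₁ * f j₀ :=
      Finset.prod_pair hj₁ne
    have hpairpos : 0 < ∏ j ∈ ({j₁, j₀} : Finset ℕ), f j := by
      rw [hpair]
      exact mul_pos (hfpos j₁ hj₁mem) (hfpos j₀ hj₀mem)
    calc ∏ j ∈ Finset.Icc l m, f j
        = (∏ j ∈ Finset.Icc l m \ {j₁, j₀}, f j) * ∏ j ∈ ({j₁, j₀} : Finset ℕ), f j := hsplit.symm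
      _ ≤ 1 * ∏ j ∈ ({j₁, j₀} : Finset ℕ), f j := by
          apply mul_le_mul_of_nonneg_right hrest (le_of_lt hpairpos)
      _ = f j₁ * f j₀ := by rw [one_mul, hpair]
  -- now the scalar estimate
  have hstep1 : f j₀ ≤ (a * lam)⁻¹ := by
    rw [hf_def]
    simp only
    rw [← ha_def]
    apply inv_anti₀ (by positivity)
    nlinarith
  have hstep2 : f j₁ ≤ (b * lam)⁻¹ := by
    rw [hf_def]
    simp only
    rw [← hb_def]
    apply inv_anti₀ (by positivity)
    nlinarith
  have hchain : lam^2 * (f j₁ * f j₀) ≤ lam^2 * ((b * lam)⁻¹ * (a * lam)⁻¹) := by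
    have h1 := hfpos j₀ hj₀mem
    have h2 := hfpos j₁ hj₁mem
    gcongr
  have heq : lam^2 * ((b * lam)⁻¹ * (a * lam)⁻¹) = (a * b)⁻¹ := by
    field_simp
  have hfinal : (a * b)⁻¹ ≤ 4 * κ / D^2 := by
    have hb2 : D / (2 * κ) ≤ b := by
      refine le_trans ?_ hj₁low
      rw [div_le_div_iff₀ (by positivity) hκ]
      nlinarith
    have hml : D / 2 * (D / (2 * κ)) ≤ a * b :=
      mul_le_mul hj₀big hb2 (by positivity) (le_of_lt ha)
    have hpos : (0:ℝ) < D / 2 * (D / (2 * κ)) := by positivity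
    have h1 : (a * b)⁻¹ ≤ (D / 2 * (D / (2 * κ)))⁻¹ :=
      inv_anti₀ hpos hml
    have h2 : (D / 2 * (D / (2 * κ)))⁻¹ = 4 * κ / D^2 := by
      field_simp
      ring
    linarith
  calc lam^2 * ∏ j ∈ Finset.Icc l m, f j
      ≤ lam^2 * (f j₁ * f j₀) := by
        apply mul_le_mul_of_nonneg_left hprod (by positivity)
    _ ≤ lam^2 * ((b * lam)⁻¹ * (a * lam)⁻¹) := hchain
    _ = (a * b)⁻¹ := heq
    _ ≤ 4 * κ / D^2 := hfinal
end
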